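/- Let h ∈ ℂ[[X,Y]] be a nonzero formal power series in two variables. Then there exist a point p ∈ ℕ² and a finite (possibly empty) list of pairs of positive integers (a₁,b₁), …, (a_k,b_k) such that the Newton diagram of h equals the Minkowski sum {p} + Teis(a₁,b₁) + ⋯ + Teis(a_k,b_k). -/

import Mathlib

open Pointwise

/-- The closed first quadrant `ℝ₊² = [0,∞)²` of `ℝ²`. -/
def firstQuadrant : Set (ℝ × ℝ) := {p | 0 ≤ p.1 ∧ 0 ≤ p.2}

/-- The Newton diagram of a set `S ⊆ ℝ²`: the convex hull of the union of the
translates `s + ℝ₊²` over `s ∈ S`. -/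
noncomputable def newtonDiagram (S : Set (ℝ × ℝ)) : Set (ℝ × ℝ) :=
  convexHull ℝ (⋃ s ∈ S, (fun q => s + q) '' firstQuadrant)

/-- The elementary Newton diagram `Teis(a,b) = conv{(0,b),(a,0)} + ℝ₊²`. -/
noncomputable def Teis (a b : ℕ) : Set (ℝ × ℝ) :=
  convexHull ℝ {((0 : ℝ), (b : ℝ)), ((a : ℝ), (0 : ℝ))} + firstQuadrant

/-- The support of a two-variable formal power series, viewed as a subset of `ℝ²`. -/
def powerSeriesSupport (h : MvPowerSeries (Fin 2) ℂ) : Set (ℝ × ℝ) :=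
  {p | ∃ d : Fin 2 →₀ ℕ, MvPowerSeries.coeff d h ≠ 0 ∧ p = ((d 0 : ℝ), (d 1 : ℝ))}

/-- The Newton diagram of a formal power series `h ∈ ℂ[[X,Y]]`. -/
noncomputable def newtonDiagramOf (h : MvPowerSeries (Fin 2) ℂ) : Set (ℝ × ℝ) :=
  newtonDiagram (powerSeriesSupport h)

namespace NewtonAux

lemma Qconvex : Convex ℝ firstQuadrant := by
  intro x hx y hy s t hs ht hst
  obtain ⟨hx1, hx2⟩ := hx; obtain ⟨hy1, hy2⟩ := hy
  constructor
  · show (0:ℝ) ≤ (s • x + t • y).1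
    simp only [Prod.fst_add, Prod.smul_fst, smul_eq_mul]
    positivity
  · show (0:ℝ) ≤ (s • x + t • y).2
    simp only [Prod.snd_add, Prod.smul_snd, smul_eq_mul]
    positivity

lemma Qzero : (0 : ℝ×ℝ) ∈ firstQuadrant := ⟨le_refl 0, le_refl 0⟩

lemma Qadd : firstQuadrant + firstQuadrant = firstQuadrant := by
  apply Set.Subset.antisymm
  · rintro x ⟨a, ha, b, hb, rfl⟩
    exact ⟨add_nonneg ha.1 hb.1, add_nonneg ha.2 hb.2⟩
  · intro x hx
    exact ⟨x, hx, 0, Qzero, add_zero x⟩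

noncomputable def nd (A : Set (ℝ×ℝ)) : Set (ℝ×ℝ) := convexHull ℝ A + firstQuadrant

lemma nd_convex (A : Set (ℝ×ℝ)) : Convex ℝ (nd A) :=
  (convex_convexHull ℝ A).add Qconvex

lemma nd_mono {A B : Set (ℝ×ℝ)} (h : A ⊆ B) : nd A ⊆ nd B :=
  Set.add_subset_add_right (convexHull_mono h)

lemma subset_nd (A : Set (ℝ×ℝ)) : A ⊆ nd A := fun a ha => by
  simpa [nd] using Set.add_mem_add (subset_convexHull ℝ A ha) Qzero

lemma nd_add_Q (A : Set (ℝ×ℝ)) : nd A + firstQuadrant = nd A := by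
  rw [nd, add_assoc, Qadd]

lemma nd_min {A C : Set (ℝ×ℝ)} (hc : Convex ℝ C) (hq : C + firstQuadrant ⊆ C)
    (hA : A ⊆ C) : nd A ⊆ C :=
  (Set.add_subset_add_right (convexHull_min hA hc)).trans hq

lemma nd_subset_nd {A B : Set (ℝ×ℝ)} (h : A ⊆ nd B) : nd A ⊆ nd B :=
  nd_min (nd_convex B) (by rw [nd_add_Q]) h

lemma nd_translate (A : Set (ℝ×ℝ)) (t : ℝ×ℝ) : nd (A + {t}) = nd A + {t} := by
  rw [nd, nd, convexHull_add, convexHull_singleton, add_right_comm]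

lemma newtonDiagram_eq_nd (S : Set (ℝ×ℝ)) : newtonDiagram S = nd S := by
  have h1 : (⋃ s ∈ S, (fun q => s + q) '' firstQuadrant) = S + firstQuadrant := by
    ext x
    simp only [Set.mem_iUnion, Set.mem_image, Set.mem_add]
    constructor
    · rintro ⟨s, hs, q, hq, rfl⟩; exact ⟨s, hs, q, hq, rfl⟩
    · rintro ⟨s, hs, q, hq, rfl⟩; exact ⟨s, hs, q, hq, rfl⟩
  rw [newtonDiagram, h1, convexHull_add, Qconvex.convexHull_eq, nd]

lemma Teis_subset_Q (a b : ℕ) : Teis a b ⊆ firstQuadrant := by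
  have h : convexHull ℝ {((0 : ℝ), (b : ℝ)), ((a : ℝ), (0 : ℝ))} ⊆ firstQuadrant := by
    apply convexHull_min _ Qconvex
    rintro x (rfl | rfl)
    · exact ⟨le_refl 0, by positivity⟩
    · exact ⟨by positivity, le_refl 0⟩
  calc Teis a b ⊆ firstQuadrant + firstQuadrant := Set.add_subset_add h subset_rfl
  _ = firstQuadrant := Qadd

lemma Teis_convex (a b : ℕ) : Convex ℝ (Teis a b) :=
  (convex_convexHull ℝ _).add Qconvex

lemma sum_convex {ι : Type*} (s : Finset ι) (f : ι → Set (ℝ×ℝ))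
    (hf : ∀ i, Convex ℝ (f i)) : Convex ℝ (∑ i ∈ s, f i) := by
  induction s using Finset.cons_induction with
  | empty => rw [Finset.sum_empty]; exact convex_singleton (𝕜 := ℝ) (0 : ℝ×ℝ)
  | cons i s hi ih => rw [Finset.sum_cons]; exact (hf i).add ih

lemma sum_subset_Q {ι : Type*} (s : Finset ι) (f : ι → Set (ℝ×ℝ))
    (hf : ∀ i, f i ⊆ firstQuadrant) : (∑ i ∈ s, f i) ⊆ firstQuadrant := by
  induction s using Finset.cons_induction with
  | empty => simp only [Finset.sum_empty]; intro x hx; simp only [Set.mem_zero] at hx; subst hx; exact Qzero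
  | cons i s hi ih => rw [Finset.sum_cons, ← Qadd]; exact Set.add_subset_add (hf i) ih


def eR (v : ℕ × ℕ) : ℝ × ℝ := ((v.1 : ℝ), (v.2 : ℝ))

lemma nd_erase {M : Finset (ℕ × ℕ)} {v : ℕ × ℕ} (hv : v ∈ M)
    (hmem : eR v ∈ nd (eR '' ↑(M.erase v))) :
    nd (eR '' ↑M) = nd (eR '' ↑(M.erase v)) := by
  apply Set.Subset.antisymm
  · apply nd_subset_nd
    rintro x ⟨u, hu, rfl⟩
    by_cases h : u = v
    · subst h; exact hmem
    · exact subset_nd _ ⟨u, by simp only [Finset.coe_erase, Set.mem_diff,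
        Set.mem_singleton_iff]; exact ⟨hu, h⟩, rfl⟩
  · exact nd_mono (Set.image_mono (Finset.coe_subset.2 (Finset.erase_subset _ _)))

lemma key {M : Finset (ℕ × ℕ)} {v w : ℕ × ℕ} (hv : v ∈ M) (hw : w ∈ M.erase v)
    (hxw : w.1 < v.1) (hyv : v.2 < w.2)
    (hxmax : ∀ u ∈ M.erase v, u.1 ≤ w.1)
    (hline : ∀ u ∈ M.erase v,
      ((v.1 : ℝ) - w.1) * ((u.2 : ℝ) - v.2) ≥ ((w.2 : ℝ) - v.2) * ((v.1 : ℝ) - u.1)) :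
    nd (eR '' ↑M) + {((0 : ℝ), ((w.2 : ℝ) - v.2))} =
      nd (eR '' ↑(M.erase v)) + Teis (v.1 - w.1) (w.2 - v.2) := by
  have e1 : ((w.2 - v.2 : ℕ) : ℝ) = (w.2 : ℝ) - v.2 := Nat.cast_sub hyv.le
  have e2 : ((v.1 - w.1 : ℕ) : ℝ) = (v.1 : ℝ) - w.1 := Nat.cast_sub hxw.le
  have hTeis : Teis (v.1 - w.1) (w.2 - v.2) =
      convexHull ℝ {((0 : ℝ), (w.2 : ℝ) - v.2), ((v.1 : ℝ) - w.1, (0 : ℝ))} + firstQuadrant := by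
    rw [Teis, e1, e2]
  have hR : nd (eR '' ↑(M.erase v)) + Teis (v.1 - w.1) (w.2 - v.2)
      = nd ((eR '' ↑(M.erase v)) + {((0 : ℝ), (w.2 : ℝ) - v.2), ((v.1 : ℝ) - w.1, (0 : ℝ))}) := by
    rw [hTeis, nd, nd, convexHull_add, add_add_add_comm, Qadd]
  rw [hR, ← nd_translate]
  have hwM : w ∈ M := Finset.mem_of_mem_erase hw
  have hcast1 : (w.1 : ℝ) < v.1 := Nat.cast_lt.2 hxw
  have hcast2 : (v.2 : ℝ) < w.2 := Nat.cast_lt.2 hyv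
  apply Set.Subset.antisymm
  · apply nd_subset_nd
    rintro x ⟨y, ⟨u, hu, rfl⟩, z, hz, rfl⟩
    rw [Set.mem_singleton_iff] at hz; subst hz
    show eR u + ((0 : ℝ), (w.2 : ℝ) - v.2) ∈
      nd ((eR '' ↑(M.erase v)) + {((0 : ℝ), (w.2 : ℝ) - v.2), ((v.1 : ℝ) - w.1, (0 : ℝ))})
    apply subset_nd
    by_cases h : u = v
    · subst h
      have heq : eR u + ((0 : ℝ), (w.2 : ℝ) - u.2) = eR w + ((u.1 : ℝ) - w.1, (0 : ℝ)) := by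
        simp only [eR, Prod.mk_add_mk, Prod.mk.injEq]
        constructor <;> ring
      rw [heq]
      exact Set.add_mem_add (Set.mem_image_of_mem eR (Finset.mem_coe.2 hw))
        (by simp)
    · refine Set.add_mem_add (Set.mem_image_of_mem eR ?_) (by simp)
      exact Finset.mem_coe.2 (Finset.mem_erase.2 ⟨h, Finset.mem_coe.1 hu⟩)
  · apply nd_subset_nd
    rintro x ⟨y, ⟨u, hu, rfl⟩, s, hs, rfl⟩
    have hu' : u ∈ M.erase v := Finset.mem_coe.1 hu
    have huM : u ∈ M := Finset.mem_of_mem_erase hu'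
    rw [nd_translate]
    rcases hs with hs | hs
    · subst hs
      show eR u + ((0 : ℝ), (w.2 : ℝ) - v.2) ∈ nd (eR '' ↑M) + {((0 : ℝ), (w.2 : ℝ) - v.2)}
      exact Set.add_mem_add (subset_nd _ (Set.mem_image_of_mem eR (Finset.mem_coe.2 huM))) rfl
    · rw [Set.mem_singleton_iff] at hs; subst hs
      show eR u + ((v.1 : ℝ) - w.1, (0 : ℝ)) ∈ nd (eR '' ↑M) + {((0 : ℝ), (w.2 : ℝ) - v.2)}
      have hux : (u.1 : ℝ) ≤ w.1 := Nat.cast_le.2 (hxmax u hu')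
      have ha : (0 : ℝ) < (v.1 : ℝ) - w.1 := by linarith
      have hb : (0 : ℝ) < (w.2 : ℝ) - v.2 := by linarith
      have hD : (0 : ℝ) < (v.1 : ℝ) - u.1 := by linarith
      have hτ0 : 0 ≤ ((v.1 : ℝ) - w.1) / ((v.1 : ℝ) - u.1) := div_nonneg ha.le hD.le
      have hτ1 : ((v.1 : ℝ) - w.1) / ((v.1 : ℝ) - u.1) ≤ 1 := (div_le_one hD).2 (by linarith)
      have hτD : ((v.1 : ℝ) - w.1) / ((v.1 : ℝ) - u.1) * ((v.1 : ℝ) - u.1)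
          = (v.1 : ℝ) - w.1 := div_mul_cancel₀ _ hD.ne'
      have hz : (1 - ((v.1 : ℝ) - w.1) / ((v.1 : ℝ) - u.1)) • eR u
            + (((v.1 : ℝ) - w.1) / ((v.1 : ℝ) - u.1)) • eR v
          ∈ convexHull ℝ (eR '' ↑M) :=
        (convex_convexHull ℝ _)
          (subset_convexHull ℝ _ (Set.mem_image_of_mem eR (Finset.mem_coe.2 huM)))
          (subset_convexHull ℝ _ (Set.mem_image_of_mem eR (Finset.mem_coe.2 hv)))
          (by linarith) hτ0 (by ring)
      have hq : (((0 : ℝ), ((v.1 : ℝ) - w.1) / ((v.1 : ℝ) - u.1) * ((u.2 : ℝ) - v.2)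
          - ((w.2 : ℝ) - v.2)) : ℝ × ℝ) ∈ firstQuadrant := by
        refine ⟨le_refl 0, ?_⟩
        show (0 : ℝ) ≤ ((v.1 : ℝ) - w.1) / ((v.1 : ℝ) - u.1) * ((u.2 : ℝ) - v.2)
          - ((w.2 : ℝ) - v.2)
        have h1 : ((w.2 : ℝ) - v.2) * ((v.1 : ℝ) - u.1)
            ≤ ((v.1 : ℝ) - w.1) * ((u.2 : ℝ) - v.2) := hline u hu'
        have h2 : (w.2 : ℝ) - v.2 ≤ ((v.1 : ℝ) - w.1) / ((v.1 : ℝ) - u.1) * ((u.2 : ℝ) - v.2) := by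
          rw [div_mul_eq_mul_div, le_div_iff₀ hD]; linarith
        linarith
      have hzc : (1 - ((v.1 : ℝ) - w.1) / ((v.1 : ℝ) - u.1)) • eR u
            + (((v.1 : ℝ) - w.1) / ((v.1 : ℝ) - u.1)) • eR v
          = (((1 - ((v.1 : ℝ) - w.1) / ((v.1 : ℝ) - u.1)) * u.1
              + ((v.1 : ℝ) - w.1) / ((v.1 : ℝ) - u.1) * v.1 : ℝ),
             ((1 - ((v.1 : ℝ) - w.1) / ((v.1 : ℝ) - u.1)) * u.2
              + ((v.1 : ℝ) - w.1) / ((v.1 : ℝ) - u.1) * v.2 : ℝ)) := by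
        simp [eR, Prod.smul_mk, Prod.mk_add_mk, smul_eq_mul]
      have hkey : eR u + ((v.1 : ℝ) - w.1, (0 : ℝ))
          = (((1 - ((v.1 : ℝ) - w.1) / ((v.1 : ℝ) - u.1)) • eR u
              + (((v.1 : ℝ) - w.1) / ((v.1 : ℝ) - u.1)) • eR v)
            + (((0 : ℝ), ((v.1 : ℝ) - w.1) / ((v.1 : ℝ) - u.1) * ((u.2 : ℝ) - v.2)
                - ((w.2 : ℝ) - v.2)) : ℝ × ℝ))
            + ((0 : ℝ), (w.2 : ℝ) - v.2) := by
        rw [hzc]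
        simp only [eR, Prod.mk_add_mk, Prod.mk.injEq]
        have hne : (v.1 : ℝ) - u.1 ≠ 0 := hD.ne'
        constructor
        · field_simp
          ring
        · ring
      rw [hkey]
      exact Set.add_mem_add (Set.add_mem_add hz hq) rfl


lemma corner_le {p v : ℕ × ℕ} (h : eR v ∈ {eR p} + firstQuadrant) :
    p.1 ≤ v.1 ∧ p.2 ≤ v.2 := by
  obtain ⟨y, hy, q, hq, heq⟩ := h
  rw [Set.mem_singleton_iff] at hy; subst hy
  rw [Prod.ext_iff] at heq
  obtain ⟨h1, h2⟩ := heq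
  constructor
  · have : (p.1 : ℝ) ≤ v.1 := by
      have := hq.1; simp only [eR, Prod.fst_add] at h1; linarith
    exact_mod_cast this
  · have : (p.2 : ℝ) ≤ v.2 := by
      have := hq.2; simp only [eR, Prod.snd_add] at h2; linarith
    exact_mod_cast this

lemma rep_subset_corner (p : ℕ × ℕ) (S : Set (ℝ × ℝ)) (hS : S ⊆ firstQuadrant) :
    {eR p} + firstQuadrant + S ⊆ {eR p} + firstQuadrant := by
  calc {eR p} + firstQuadrant + S ⊆ {eR p} + firstQuadrant + firstQuadrant :=
        Set.add_subset_add_left hS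
  _ = {eR p} + firstQuadrant := by rw [add_assoc, Qadd]

lemma dominated_mem {M : Finset (ℕ × ℕ)} {u z : ℕ × ℕ} (hu : u ∈ M) (hne : u ≠ z)
    (h1 : u.1 ≤ z.1) (h2 : u.2 ≤ z.2) : eR z ∈ nd (eR '' ↑(M.erase z)) := by
  have hq : (((z.1 : ℝ) - u.1, (z.2 : ℝ) - u.2) : ℝ × ℝ) ∈ firstQuadrant :=
    ⟨sub_nonneg.2 (Nat.cast_le.2 h1), sub_nonneg.2 (Nat.cast_le.2 h2)⟩
  have heq : eR z = eR u + ((z.1 : ℝ) - u.1, (z.2 : ℝ) - u.2) := by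
    simp only [eR, Prod.mk_add_mk, Prod.mk.injEq]
    constructor <;> ring
  rw [heq]
  exact Set.add_mem_add (subset_convexHull ℝ _ (Set.mem_image_of_mem eR
    (Finset.mem_coe.2 (Finset.mem_erase.2 ⟨hne, hu⟩)))) hq

lemma above_segment {u v wp : ℕ × ℕ} {S : Set (ℝ × ℝ)}
    (hu : eR u ∈ S) (hv : eR v ∈ S)
    (hux : u.1 ≤ wp.1) (hxv : wp.1 < v.1)
    (hy : ((wp.1 : ℝ) - u.1) * ((v.2 : ℝ) - u.2) ≤ ((wp.2 : ℝ) - u.2) * ((v.1 : ℝ) - u.1)) :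
    eR wp ∈ nd S := by
  have hux' : (u.1 : ℝ) ≤ wp.1 := Nat.cast_le.2 hux
  have hxv' : (wp.1 : ℝ) < v.1 := Nat.cast_lt.2 hxv
  have hD : (0 : ℝ) < (v.1 : ℝ) - u.1 := by linarith
  have hτ0 : 0 ≤ ((wp.1 : ℝ) - u.1) / ((v.1 : ℝ) - u.1) := div_nonneg (by linarith) hD.le
  have hτ1 : ((wp.1 : ℝ) - u.1) / ((v.1 : ℝ) - u.1) ≤ 1 := (div_le_one hD).2 (by linarith)
  have hz : (1 - ((wp.1 : ℝ) - u.1) / ((v.1 : ℝ) - u.1)) • eR u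
        + (((wp.1 : ℝ) - u.1) / ((v.1 : ℝ) - u.1)) • eR v ∈ convexHull ℝ S :=
    (convex_convexHull ℝ _) (subset_convexHull ℝ _ hu) (subset_convexHull ℝ _ hv)
      (by linarith) hτ0 (by ring)
  have hq : (((0 : ℝ), (wp.2 : ℝ) - ((1 - ((wp.1 : ℝ) - u.1) / ((v.1 : ℝ) - u.1)) * u.2
      + ((wp.1 : ℝ) - u.1) / ((v.1 : ℝ) - u.1) * v.2)) : ℝ × ℝ) ∈ firstQuadrant := by
    refine ⟨le_refl 0, ?_⟩
    show (0 : ℝ) ≤ (wp.2 : ℝ) - ((1 - ((wp.1 : ℝ) - u.1) / ((v.1 : ℝ) - u.1)) * u.2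
      + ((wp.1 : ℝ) - u.1) / ((v.1 : ℝ) - u.1) * v.2)
    rw [sub_nonneg]
    have key : ((wp.1 : ℝ) - u.1) / ((v.1 : ℝ) - u.1) * ((v.2 : ℝ) - u.2)
        ≤ (wp.2 : ℝ) - u.2 := by
      rw [div_mul_eq_mul_div, div_le_iff₀ hD]; linarith
    nlinarith [key]
  have heq : eR wp = ((1 - ((wp.1 : ℝ) - u.1) / ((v.1 : ℝ) - u.1)) • eR u
        + (((wp.1 : ℝ) - u.1) / ((v.1 : ℝ) - u.1)) • eR v)
      + (((0 : ℝ), (wp.2 : ℝ) - ((1 - ((wp.1 : ℝ) - u.1) / ((v.1 : ℝ) - u.1)) * u.2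
      + ((wp.1 : ℝ) - u.1) / ((v.1 : ℝ) - u.1) * v.2)) : ℝ × ℝ) := by
    have hzc : (1 - ((wp.1 : ℝ) - u.1) / ((v.1 : ℝ) - u.1)) • eR u
          + (((wp.1 : ℝ) - u.1) / ((v.1 : ℝ) - u.1)) • eR v
        = (((1 - ((wp.1 : ℝ) - u.1) / ((v.1 : ℝ) - u.1)) * u.1
            + ((wp.1 : ℝ) - u.1) / ((v.1 : ℝ) - u.1) * v.1 : ℝ),
           ((1 - ((wp.1 : ℝ) - u.1) / ((v.1 : ℝ) - u.1)) * u.2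
            + ((wp.1 : ℝ) - u.1) / ((v.1 : ℝ) - u.1) * v.2 : ℝ)) := by
      simp [eR, Prod.smul_mk, Prod.mk_add_mk, smul_eq_mul]
    rw [hzc]
    simp only [eR, Prod.mk_add_mk, Prod.mk.injEq]
    have hne : (v.1 : ℝ) - u.1 ≠ 0 := hD.ne'
    constructor
    · field_simp
      ring
    · ring
  rw [heq]
  exact Set.add_mem_add hz hq

lemma add_singleton_cancel {A B : Set (ℝ × ℝ)} {t : ℝ × ℝ} (h : A + {t} = B + {t}) :
    A = B :=
  Set.image_injective.mpr (add_left_injective t)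
    (by simpa [Set.add_singleton] using h)


lemma main_fin : ∀ (n : ℕ) (M : Finset (ℕ × ℕ)), M.card ≤ n → M.Nonempty →
    ∃ (p : ℕ × ℕ) (k : ℕ) (a b : Fin k → ℕ), (∀ i, 0 < a i) ∧ (∀ i, 0 < b i) ∧
      nd (eR '' ↑M) = {eR p} + firstQuadrant + ∑ i : Fin k, Teis (a i) (b i) ∧
      (∀ u ∈ M, p.1 ≤ u.1 ∧ p.2 ≤ u.2) ∧ (∃ u ∈ M, u.1 = p.1) ∧ (∃ u ∈ M, u.2 = p.2) := by
  intro n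
  induction n with
  | zero => intro M hc hne; exact absurd (Finset.card_pos.2 hne) (by omega)
  | succ n ih =>
    intro M hcard hne
    by_cases hc1 : M.card = 1
    · obtain ⟨m, rfl⟩ := Finset.card_eq_one.1 hc1
      refine ⟨m, 0, Fin.elim0, Fin.elim0, (fun i => i.elim0), (fun i => i.elim0), ?_, ?_, ?_, ?_⟩
      · simp only [Finset.coe_singleton, Set.image_singleton, Finset.univ_eq_empty,
          Finset.sum_empty, add_zero, nd, convexHull_singleton]
      · intro u hu; rw [Finset.mem_singleton] at hu; subst hu; exact ⟨le_refl _, le_refl _⟩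
      · exact ⟨m, Finset.mem_singleton_self m, rfl⟩
      · exact ⟨m, Finset.mem_singleton_self m, rfl⟩
    have hc2 : 2 ≤ M.card := by
      have := Finset.card_pos.2 hne; omega
    by_cases hrem : ∃ v ∈ M, eR v ∈ nd (eR '' ↑(M.erase v))
    · obtain ⟨v, hv, hmem⟩ := hrem
      have heq := nd_erase hv hmem
      have hEcard : (M.erase v).card ≤ n := by
        rw [Finset.card_erase_of_mem hv]; omega
      have hEne : (M.erase v).Nonempty :=
        Finset.card_pos.1 (by rw [Finset.card_erase_of_mem hv]; omega)
      obtain ⟨p, k, a, b, hpa, hpb, hrep, hmin, hach1, hach2⟩ := ih (M.erase v) hEcard hEne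
      refine ⟨p, k, a, b, hpa, hpb, heq.trans hrep, ?_, ?_, ?_⟩
      · intro u hu
        by_cases h : u = v
        · subst h
          exact corner_le (rep_subset_corner p _
            (sum_subset_Q _ _ (fun i => Teis_subset_Q _ _)) (hrep ▸ hmem))
        · exact hmin u (Finset.mem_erase.2 ⟨h, hu⟩)
      · obtain ⟨u, huE, h⟩ := hach1; exact ⟨u, Finset.mem_of_mem_erase huE, h⟩
      · obtain ⟨u, huE, h⟩ := hach2; exact ⟨u, Finset.mem_of_mem_erase huE, h⟩
    · push_neg at hrem
      have incomp : ∀ u ∈ M, ∀ z ∈ M, u ≠ z → u.1 ≤ z.1 → u.2 ≤ z.2 → False := by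
        intro u hu z hz hne' h1 h2
        exact hrem z hz (dominated_mem hu hne' h1 h2)
      obtain ⟨v, hv, hvmax⟩ := M.exists_max_image Prod.fst hne
      have hvx : ∀ u ∈ M, u ≠ v → u.1 < v.1 := by
        intro u hu hne'
        rcases lt_or_eq_of_le (hvmax u hu) with h | h
        · exact h
        · exfalso
          rcases le_total u.2 v.2 with h2 | h2
          · exact incomp u hu v hv hne' (le_of_eq h) h2
          · exact incomp v hv u hu (Ne.symm hne') (le_of_eq h.symm) h2
      have hvy : ∀ u ∈ M, u ≠ v → v.2 < u.2 := by
        intro u hu hne'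
        by_contra hcon
        push_neg at hcon
        exact incomp u hu v hv hne' (hvmax u hu) hcon
      have hEne : (M.erase v).Nonempty :=
        Finset.card_pos.1 (by rw [Finset.card_erase_of_mem hv]; omega)
      obtain ⟨w, hwE, hwmax⟩ := (M.erase v).exists_max_image Prod.fst hEne
      have hwM : w ∈ M := Finset.mem_of_mem_erase hwE
      have hwv : w ≠ v := (Finset.mem_erase.1 hwE).1
      have hxw : w.1 < v.1 := hvx w hwM hwv
      have hyv : v.2 < w.2 := hvy w hwM hwv
      have hywmin : ∀ u ∈ M.erase v, w.2 ≤ u.2 := by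
        intro u huE
        by_cases h : u = w
        · subst h; exact le_refl _
        · by_contra hcon
          push_neg at hcon
          exact incomp u (Finset.mem_of_mem_erase huE) w hwM h (hwmax u huE) hcon.le
      have hline : ∀ u ∈ M.erase v,
          ((v.1 : ℝ) - w.1) * ((u.2 : ℝ) - v.2) ≥ ((w.2 : ℝ) - v.2) * ((v.1 : ℝ) - u.1) := by
        intro u huE
        by_contra hcon
        push_neg at hcon
        have huw : u ≠ w := by
          rintro rfl
          rw [mul_comm] at hcon
          exact lt_irrefl _ hcon
        apply hrem w hwM
        apply above_segment (u := u) (v := v)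
          (Set.mem_image_of_mem eR (Finset.mem_coe.2
            (Finset.mem_erase.2 ⟨huw, Finset.mem_of_mem_erase huE⟩)))
          (Set.mem_image_of_mem eR (Finset.mem_coe.2
            (Finset.mem_erase.2 ⟨Ne.symm hwv, hv⟩)))
          (hwmax u huE) hxw
        nlinarith [hcon]
      obtain ⟨p', k', a', b', hpa', hpb', hrep', hmin', hach1', hach2'⟩ :=
        ih (M.erase v) (by rw [Finset.card_erase_of_mem hv]; omega) hEne
      have hp'2 : p'.2 = w.2 := by
        obtain ⟨u, huE, hu2⟩ := hach2'
        have h1 := (hmin' w hwE).2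
        have h2 := hywmin u huE
        omega
      have keyeq := key hv hwE hxw hyv hwmax hline
      refine ⟨(p'.1, v.2), k' + 1, (Fin.snoc a' (v.1 - w.1) : Fin (k' + 1) → ℕ),
        (Fin.snoc b' (w.2 - v.2) : Fin (k' + 1) → ℕ), ?_, ?_, ?_, ?_, ?_, ?_⟩
      · intro i
        refine Fin.lastCases ?_ (fun j => ?_) i
        · simp only [Fin.snoc_last]; omega
        · simp only [Fin.snoc_castSucc]; exact hpa' j
      · intro i
        refine Fin.lastCases ?_ (fun j => ?_) i
        · simp only [Fin.snoc_last]; omega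
        · simp only [Fin.snoc_castSucc]; exact hpb' j
      · apply add_singleton_cancel (t := ((0 : ℝ), (w.2 : ℝ) - v.2))
        rw [keyeq, hrep']
        have hsum : ∑ i : Fin (k' + 1),
              Teis ((Fin.snoc a' (v.1 - w.1) : Fin (k' + 1) → ℕ) i)
                ((Fin.snoc b' (w.2 - v.2) : Fin (k' + 1) → ℕ) i)
            = (∑ i : Fin k', Teis (a' i) (b' i)) + Teis (v.1 - w.1) (w.2 - v.2) := by
          rw [Fin.sum_univ_castSucc]
          simp only [Fin.snoc_castSucc, Fin.snoc_last]
        rw [hsum]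
        have hpt : ({eR p'} : Set (ℝ × ℝ))
            = {eR (p'.1, v.2)} + {((0 : ℝ), (w.2 : ℝ) - v.2)} := by
          rw [Set.singleton_add_singleton]
          have : eR p' = eR (p'.1, v.2) + ((0 : ℝ), (w.2 : ℝ) - v.2) := by
            simp only [eR, Prod.mk_add_mk, Prod.mk.injEq]
            constructor
            · ring
            · rw [hp'2]; ring
          rw [this]
        rw [hpt]
        abel
      · intro u hu
        by_cases h : u = v
        · have hu1 : u.1 = v.1 := by rw [h]
          have hu2 : u.2 = v.2 := by rw [h]
          have h1 := (hmin' w hwE).1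
          exact ⟨by simp only []; omega, by simp only []; omega⟩
        · have huE : u ∈ M.erase v := Finset.mem_erase.2 ⟨h, hu⟩
          exact ⟨(hmin' u huE).1, (hvy u hu h).le⟩
      · obtain ⟨u, huE, h⟩ := hach1'; exact ⟨u, Finset.mem_of_mem_erase huE, h⟩
      · exact ⟨v, hv, rfl⟩

end NewtonAux

/-- The Newton diagram of a nonzero `h ∈ ℂ[[X,Y]]` decomposes as a
Minkowski sum of a point of `ℕ²` and finitely many elementary Newton diagrams.
(The empty Minkowski sum of Newton diagrams is `ℝ₊²`, the neutral element of the
semigroup of Newton diagrams; since `Teis a b + ℝ₊² = Teis a b`, including the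
summand `ℝ₊²` is harmless when the list is nonempty.) -/
theorem newtonDiagram_eq_sum_Teis (h : MvPowerSeries (Fin 2) ℂ) (h0 : h ≠ 0) :
    ∃ (p : ℕ × ℕ) (k : ℕ) (a b : Fin k → ℕ), (∀ i, 0 < a i) ∧ (∀ i, 0 < b i) ∧
      newtonDiagramOf h =
        {(((p.1 : ℝ), (p.2 : ℝ)) : ℝ × ℝ)} + firstQuadrant +
          ∑ i : Fin k, Teis (a i) (b i) := by
  classical
  set T : Set (ℕ × ℕ) :=
    {t | ∃ d : Fin 2 →₀ ℕ, MvPowerSeries.coeff d h ≠ 0 ∧ t = (d 0, d 1)} with hT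
  have hsupp : powerSeriesSupport h = NewtonAux.eR '' T := by
    ext x
    simp only [powerSeriesSupport, Set.mem_setOf_eq, Set.mem_image, hT, NewtonAux.eR]
    constructor
    · rintro ⟨d, hd, rfl⟩; exact ⟨(d 0, d 1), ⟨d, hd, rfl⟩, rfl⟩
    · rintro ⟨t, ⟨d, hd, rfl⟩, rfl⟩; exact ⟨d, hd, rfl⟩
  have hTne : T.Nonempty := by
    by_contra hc
    apply h0
    apply MvPowerSeries.ext
    intro d
    rw [map_zero]
    by_contra hd
    exact hc ⟨(d 0, d 1), ⟨d, hd, rfl⟩⟩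
  set Mv : Set (ℕ × ℕ) :=
    {t | t ∈ T ∧ ∀ s ∈ T, s.1 ≤ t.1 → s.2 ≤ t.2 → s = t} with hMv
  have hexmin : ∀ t ∈ T, ∃ m ∈ Mv, m.1 ≤ t.1 ∧ m.2 ≤ t.2 := by
    have hrec : ∀ (n : ℕ) (t : ℕ × ℕ), t ∈ T → t.1 + t.2 ≤ n →
        ∃ m ∈ Mv, m.1 ≤ t.1 ∧ m.2 ≤ t.2 := by
      intro n
      induction n with
      | zero =>
        intro t ht hn
        refine ⟨t, ⟨ht, ?_⟩, le_refl _, le_refl _⟩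
        intro s hs h1 h2
        have h3 : s.1 = t.1 ∧ s.2 = t.2 := by omega
        exact Prod.ext h3.1 h3.2
      | succ n ihn =>
        intro t ht hn
        by_cases hmin : ∀ s ∈ T, s.1 ≤ t.1 → s.2 ≤ t.2 → s = t
        · exact ⟨t, ⟨ht, hmin⟩, le_refl _, le_refl _⟩
        · push_neg at hmin
          obtain ⟨s, hs, h1, h2, hne⟩ := hmin
          have hco : s.1 ≠ t.1 ∨ s.2 ≠ t.2 := by
            by_contra hc; push_neg at hc; exact hne (Prod.ext hc.1 hc.2)
          obtain ⟨m, hm, hm1, hm2⟩ := ihn s hs (by omega)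
          exact ⟨m, hm, le_trans hm1 h1, le_trans hm2 h2⟩
    intro t ht; exact hrec (t.1 + t.2) t ht (le_refl _)
  obtain ⟨t1, ht1⟩ := hTne
  obtain ⟨t0, ht0, _, _⟩ := hexmin t1 ht1
  have hMvfin : Mv.Finite := by
    have hinj : Set.InjOn
        (fun m : ℕ × ℕ => if m.1 < t0.1 then Sum.inl m.1 else Sum.inr m.2) Mv := by
      intro m1 hm1 m2 hm2 heq
      simp only at heq
      by_cases c1 : m1.1 < t0.1 <;> by_cases c2 : m2.1 < t0.1 <;>
        simp only [c1, c2, if_true, if_false, reduceIte, Sum.inl.injEq, Sum.inr.injEq] at heq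
      · rcases le_total m1.2 m2.2 with hle | hle
        · exact hm2.2 m1 hm1.1 (le_of_eq heq) hle
        · exact (hm1.2 m2 hm2.1 (le_of_eq heq.symm) hle).symm
      · exact absurd heq Sum.inl_ne_inr
      · exact absurd heq Sum.inr_ne_inl
      · rcases le_total m1.1 m2.1 with hle | hle
        · exact hm2.2 m1 hm1.1 hle (le_of_eq heq)
        · exact (hm1.2 m2 hm2.1 hle (le_of_eq heq.symm)).symm
    have himg : (fun m : ℕ × ℕ => if m.1 < t0.1 then Sum.inl m.1 else Sum.inr m.2) '' Mv ⊆
        Sum.inl '' (Set.Iio t0.1) ∪ Sum.inr '' (Set.Iic t0.2) := by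
      rintro x ⟨m, hm, rfl⟩
      by_cases c : m.1 < t0.1
      · left; exact ⟨m.1, Set.mem_Iio.2 c, by simp [c]⟩
      · right
        refine ⟨m.2, Set.mem_Iic.2 ?_, by simp [c]⟩
        by_cases hmt : m = t0
        · simp [hmt]
        · by_contra hc
          push_neg at hc
          exact hmt ((hm.2 t0 ht0.1 (by omega) hc.le).symm)
    exact Set.Finite.of_finite_image (Set.Finite.subset (Set.Finite.union
      ((Set.finite_Iio _).image _) ((Set.finite_Iic _).image _)) himg) hinj
  have hMFc : (hMvfin.toFinset : Set (ℕ × ℕ)) = Mv := hMvfin.coe_toFinset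
  have hMFne : hMvfin.toFinset.Nonempty := by
    rw [← Finset.coe_nonempty, hMFc]; exact ⟨t0, ht0⟩
  have hndeq : NewtonAux.nd (NewtonAux.eR '' T)
      = NewtonAux.nd (NewtonAux.eR '' ↑hMvfin.toFinset) := by
    apply Set.Subset.antisymm
    · apply NewtonAux.nd_subset_nd
      rintro x ⟨t, ht, rfl⟩
      obtain ⟨m, hm, h1, h2⟩ := hexmin t ht
      have hq : (((t.1 : ℝ) - m.1, (t.2 : ℝ) - m.2) : ℝ × ℝ) ∈ firstQuadrant :=
        ⟨sub_nonneg.2 (Nat.cast_le.2 h1), sub_nonneg.2 (Nat.cast_le.2 h2)⟩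
      have heq : NewtonAux.eR t
          = NewtonAux.eR m + ((t.1 : ℝ) - m.1, (t.2 : ℝ) - m.2) := by
        simp only [NewtonAux.eR, Prod.mk_add_mk, Prod.mk.injEq]
        constructor <;> ring
      rw [heq]
      exact Set.add_mem_add (subset_convexHull ℝ _
        (Set.mem_image_of_mem _ (by rw [hMFc]; exact hm))) hq
    · exact NewtonAux.nd_mono (Set.image_mono (by rw [hMFc]; exact fun m hm => hm.1))
  obtain ⟨p, k, a, b, hpa, hpb, hrep, -, -, -⟩ :=
    NewtonAux.main_fin hMvfin.toFinset.card hMvfin.toFinset (le_refl _) hMFne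
  refine ⟨p, k, a, b, hpa, hpb, ?_⟩
  rw [newtonDiagramOf, NewtonAux.newtonDiagram_eq_nd, hsupp, hndeq, hrep]
  rfl
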